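/- Let π be a probability distribution with full support on a finite set Ω, let J be an Ω-valued random variable, and let A be an event with positive probability. Then the chi-squared (L²(π)) distance of the conditional law of J given A from π satisfies ‖P(J ∈ · | A) − π‖²_{2,π} ≤ (‖P(J ∈ ·) − π‖²_{2,π} + 1)/P(A)² − 1, where ‖σ‖²_{2,π} = Σ_x π(x)(σ(x)/π(x) − 1)² for a signed measure σ with σ(Ω)=1 (here applied to probability measures minus π). -/

import Mathlib

open MeasureTheory

noncomputable section

/-- The chi-squared (L²(π)) distance of a (sub)probability vector `ν` from `π`:
`‖ν − π‖²_{2,π} = Σ_x π(x) (ν(x)/π(x) − 1)²`. -/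
def chiSq {Ω : Type*} [Fintype Ω] (π ν : Ω → ℝ) : ℝ :=
  ∑ x, π x * (ν x / π x - 1) ^ 2

lemma chiSq_eq {Ω : Type*} [Fintype Ω] (π ν : Ω → ℝ) (hπ : ∀ x, π x ≠ 0)
    (hπsum : ∑ x, π x = 1) :
    chiSq π ν = (∑ x, (ν x) ^ 2 / π x) - 2 * (∑ x, ν x) + 1 := by
  unfold chiSq
  have h : ∀ x : Ω, π x * (ν x / π x - 1) ^ 2 = (ν x) ^ 2 / π x - 2 * ν x + π x := by
    intro x
    field_simp [hπ x]
    ring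
  rw [Finset.sum_congr rfl (fun x _ => h x), Finset.sum_add_distrib,
    Finset.sum_sub_distrib, hπsum, Finset.mul_sum]

theorem stmt0 {Ω : Type*} [Fintype Ω] [MeasurableSpace Ω] [MeasurableSingletonClass Ω]
    {Θ : Type*} [MeasurableSpace Θ] (μ : Measure Θ) [IsProbabilityMeasure μ]
    (π : Ω → ℝ) (hπpos : ∀ x, 0 < π x) (hπsum : ∑ x, π x = 1)
    (J : Θ → Ω) (hJ : Measurable J)
    (A : Set Θ) (hAmeas : MeasurableSet A) (hA : 0 < (μ A).toReal) :
    chiSq π (fun x => (μ (A ∩ J ⁻¹' {x})).toReal / (μ A).toReal)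
      ≤ (chiSq π (fun x => (μ (J ⁻¹' {x})).toReal) + 1) / (μ A).toReal ^ 2 - 1 := by
  set p : ℝ := (μ A).toReal with hp
  have hπ : ∀ x, π x ≠ 0 := fun x => (hπpos x).ne'
  -- partition sums
  have hpart : ∀ (B : Set Θ), MeasurableSet B → ∑ x, μ (B ∩ J ⁻¹' {x}) = μ B := by
    intro B hB
    rw [← tsum_fintype (L := SummationFilter.unconditional _), ← measure_iUnion]
    · congr 1
      ext θ
      simp
    · intro i j hij
      refine Set.disjoint_left.2 fun θ hθi hθj => hij ?_
      exact hθi.2.symm.trans hθj.2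
    · exact fun x => hB.inter (hJ (measurableSet_singleton x))
  have hfin : ∀ (B : Set Θ), μ B ≠ ⊤ := fun B => measure_ne_top μ B
  have hsumA : ∑ x, (μ (A ∩ J ⁻¹' {x})).toReal = p := by
    rw [← ENNReal.toReal_sum (fun x _ => hfin _), hpart A hAmeas]
  have hsumb : ∑ x, (μ (J ⁻¹' {x})).toReal = 1 := by
    have := hpart Set.univ MeasurableSet.univ
    simp only [Set.univ_inter] at this
    rw [← ENNReal.toReal_sum (fun x _ => hfin _), this, measure_univ, ENNReal.toReal_one]
  have hab : ∀ x, (μ (A ∩ J ⁻¹' {x})).toReal ≤ (μ (J ⁻¹' {x})).toReal :=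
    fun x => ENNReal.toReal_mono (hfin _) (measure_mono Set.inter_subset_right)
  rw [chiSq_eq π _ hπ hπsum, chiSq_eq π _ hπ hπsum]
  have hsumAdiv : ∑ x, (μ (A ∩ J ⁻¹' {x})).toReal / p = 1 := by
    rw [← Finset.sum_div, hsumA, div_self hA.ne']
  rw [hsumAdiv, hsumb]
  have hp2 : (0:ℝ) < p ^ 2 := by positivity
  have key : ∑ x, ((μ (A ∩ J ⁻¹' {x})).toReal / p) ^ 2 / π x
      ≤ (∑ x, (μ (J ⁻¹' {x})).toReal ^ 2 / π x) / p ^ 2 := by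
    rw [Finset.sum_div]
    apply Finset.sum_le_sum
    intro x _
    have e : ((μ (A ∩ J ⁻¹' {x})).toReal / p) ^ 2 / π x
        = (μ (A ∩ J ⁻¹' {x})).toReal ^ 2 / π x / p ^ 2 := by
      rw [div_pow]; ring
    rw [e]
    have h2 : (μ (A ∩ J ⁻¹' {x})).toReal ^ 2 ≤ (μ (J ⁻¹' {x})).toReal ^ 2 :=
      pow_le_pow_left₀ ENNReal.toReal_nonneg (hab x) 2
    exact div_le_div_of_nonneg_right ((div_le_div_iff_of_pos_right (hπpos x)).2 h2) hp2.le
  have hr : (∑ x, (μ (J ⁻¹' {x})).toReal ^ 2 / π x - 2 * 1 + 1 + 1) / p ^ 2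
      = (∑ x, (μ (J ⁻¹' {x})).toReal ^ 2 / π x) / p ^ 2 := by ring
  rw [hr]
  linarith
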